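/- arXiv:2407.16242 — 3 statements merged into one kernel-verified Lean document; each statement's English description precedes it below -/
import Mathlib

section
/- For all x in [0,1], the function value arccos(sqrt((1/π)·arccos(x))) satisfies π/4 + x/π ≤ arccos(sqrt((1/π)·arccos(x))) ≤ (π/4)(1+x). -/
open Real

theorem stmt_0 (x : ℝ) (hx : x ∈ Set.Icc (0:ℝ) 1) :
    π/4 + x/π ≤ Real.arccos (Real.sqrt (π⁻¹ * Real.arccos x)) ∧
    Real.arccos (Real.sqrt (π⁻¹ * Real.arccos x)) ≤ (π/4) * (1 + x) := by
  obtain ⟨hx0, hx1⟩ := hx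
  have hπ : (0:ℝ) < π := Real.pi_pos
  have hπ3 : (3:ℝ) < π := Real.pi_gt_three
  have hθ0 : 0 ≤ Real.arccos x := Real.arccos_nonneg x
  have harc : Real.arccos x = π/2 - Real.arcsin x :=
    Real.arccos_eq_pi_div_two_sub_arcsin x
  have has0 : 0 ≤ Real.arcsin x := Real.arcsin_nonneg.2 hx0
  -- Jordan's inequality at π/2 * x
  have hjordan : x ≤ Real.sin (π/2 * x) := by
    have h := Real.mul_le_sin (x := π/2 * x) (by positivity) (by nlinarith)
    have he : 2/π * (π/2 * x) = x := by field_simp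
    linarith [he ▸ h]
  -- arcsin x ≤ π/2 * x
  have h1 : Real.arcsin x ≤ π/2 * x := by
    have h2 : Real.arcsin x ≤ Real.arcsin (Real.sin (π/2 * x)) :=
      Real.monotone_arcsin hjordan
    rwa [Real.arcsin_sin (by nlinarith) (by nlinarith)] at h2
  -- x ≤ arcsin x
  have h2 : x ≤ Real.arcsin x := by
    have h := Real.sin_le has0
    rwa [Real.sin_arcsin (by linarith) hx1] at h
  have hsqrt0 : 0 ≤ Real.sqrt (π⁻¹ * Real.arccos x) := Real.sqrt_nonneg _
  have hxπ : x/π ≤ 1/3 := by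
    rw [div_le_iff₀ hπ]; nlinarith
  constructor
  · -- lower bound
    have hd0 : (0:ℝ) ≤ π/4 + x/π := by positivity
    have hdlt : π/4 + x/π ≤ π/2 := by linarith
    have hcosd : 0 ≤ Real.cos (π/4 + x/π) :=
      Real.cos_nonneg_of_mem_Icc ⟨by linarith, hdlt⟩
    have key : Real.sqrt (π⁻¹ * Real.arccos x) ≤ Real.cos (π/4 + x/π) := by
      rw [Real.sqrt_le_left hcosd]
      have hcos2 : Real.cos (π/4 + x/π) ^ 2 = 1/2 + Real.cos (2*(π/4 + x/π)) / 2 :=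
        Real.cos_sq _
      have h2d : Real.cos (2*(π/4 + x/π)) = - Real.sin (2*x/π) := by
        have he : 2*(π/4 + x/π) = π/2 + 2*x/π := by ring
        rw [he, Real.cos_add, Real.cos_pi_div_two, Real.sin_pi_div_two]; ring
      have hsinle : Real.sin (2*x/π) ≤ 2*x/π := Real.sin_le (by positivity)
      have hkey1 : π/2 * Real.sin (2*x/π) ≤ x := by
        have h := mul_le_mul_of_nonneg_left hsinle (by positivity : (0:ℝ) ≤ π/2)
        have he : π/2 * (2*x/π) = x := by field_simp
        linarith
      rw [hcos2, h2d, harc, inv_mul_eq_div, div_le_iff₀ hπ]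
      nlinarith [hkey1, h2]
    have hmon : Real.arcsin (Real.sqrt (π⁻¹ * Real.arccos x)) ≤ Real.arcsin (Real.cos (π/4 + x/π)) :=
      Real.monotone_arcsin key
    have hac : Real.arccos (Real.cos (π/4 + x/π)) = π/4 + x/π :=
      Real.arccos_cos hd0 (by linarith)
    rw [Real.arccos_eq_pi_div_two_sub_arcsin] at hac ⊢
    linarith
  · -- upper bound
    have hc0 : (0:ℝ) ≤ π/4 * (1 + x) := by positivity
    have hclt : π/4 * (1 + x) ≤ π/2 := by nlinarith
    have hcosc : 0 ≤ Real.cos (π/4 * (1 + x)) :=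
      Real.cos_nonneg_of_mem_Icc ⟨by linarith, hclt⟩
    have key : Real.cos (π/4 * (1 + x)) ≤ Real.sqrt (π⁻¹ * Real.arccos x) := by
      rw [Real.le_sqrt hcosc (by positivity)]
      have hcos2 : Real.cos (π/4 * (1 + x)) ^ 2 = 1/2 + Real.cos (2*(π/4 * (1 + x))) / 2 :=
        Real.cos_sq _
      have h2c : Real.cos (2*(π/4 * (1 + x))) = - Real.sin (π/2 * x) := by
        have he : 2*(π/4 * (1 + x)) = π/2 + π/2 * x := by ring
        rw [he, Real.cos_add, Real.cos_pi_div_two, Real.sin_pi_div_two]; ring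
      have hkey2 : π/2 * x ≤ π/2 * Real.sin (π/2 * x) :=
        mul_le_mul_of_nonneg_left hjordan (by positivity)
      rw [hcos2, h2c, harc, inv_mul_eq_div, le_div_iff₀ hπ]
      nlinarith [hkey2, h1]
    have hmon : Real.arcsin (Real.cos (π/4 * (1 + x))) ≤ Real.arcsin (Real.sqrt (π⁻¹ * Real.arccos x)) :=
      Real.monotone_arcsin key
    have hac : Real.arccos (Real.cos (π/4 * (1 + x))) = π/4 * (1 + x) :=
      Real.arccos_cos hc0 (by linarith)
    rw [Real.arccos_eq_pi_div_two_sub_arcsin] at hac ⊢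
    linarith
end

section
/- The map x ↦ arccos(sqrt((1/π)·arccos(x))) is convex on [0,1]. -/
open Real

private lemma hda {x : ℝ} (hx : x ∈ Set.Ioo (0:ℝ) 1) :
    HasDerivAt (fun x => Real.arccos (Real.sqrt (π⁻¹ * Real.arccos x)))
      (π⁻¹ / (2 * Real.sqrt (π⁻¹ * Real.arccos x * (1 - π⁻¹ * Real.arccos x)) *
        Real.sin (Real.arccos x))) x := by
  obtain ⟨hx0, hx1⟩ := hx
  have hpi : (0:ℝ) < π := Real.pi_pos
  have hu0 : 0 < Real.arccos x := Real.arccos_pos.2 hx1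
  have hu2 : Real.arccos x < π / 2 := Real.arccos_lt_pi_div_two.2 hx0
  have hv0 : 0 < π⁻¹ * Real.arccos x := by positivity
  have hv1 : π⁻¹ * Real.arccos x < 1 := by
    rw [inv_mul_lt_iff₀ hpi]; linarith
  have h1 : HasDerivAt (fun x : ℝ => π⁻¹ * Real.arccos x)
      (π⁻¹ * -(1 / Real.sqrt (1 - x ^ 2))) x :=
    (Real.hasDerivAt_arccos (by linarith) (by linarith)).const_mul π⁻¹
  have h2 := h1.sqrt (ne_of_gt hv0)
  have hs1 : Real.sqrt (π⁻¹ * Real.arccos x) < 1 := by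
    rw [show (1:ℝ) = Real.sqrt 1 by simp]
    exact Real.sqrt_lt_sqrt hv0.le hv1
  have hs0 : 0 < Real.sqrt (π⁻¹ * Real.arccos x) := Real.sqrt_pos.2 hv0
  have h3 := (Real.hasDerivAt_arccos (x := Real.sqrt (π⁻¹ * Real.arccos x))
      (by linarith) (ne_of_lt hs1)).comp x h2
  refine h3.congr_deriv ?_
  symm
  have hsq : Real.sqrt (π⁻¹ * Real.arccos x) ^ 2 = π⁻¹ * Real.arccos x :=
    Real.sq_sqrt hv0.le
  rw [hsq]
  have hx2 : (0:ℝ) < 1 - x ^ 2 := by nlinarith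
  have hsin : Real.sin (Real.arccos x) = Real.sqrt (1 - x ^ 2) := Real.sin_arccos x
  rw [hsin]
  rw [Real.sqrt_mul hv0.le]
  have h4 : Real.sqrt (1 - x ^ 2) > 0 := Real.sqrt_pos.2 hx2
  have h5 : Real.sqrt (1 - π⁻¹ * Real.arccos x) > 0 := Real.sqrt_pos.2 (by linarith)
  have hpne : π ≠ 0 := hpi.ne'
  field_simp

theorem stmt_1 :
    ConvexOn ℝ (Set.Icc (0:ℝ) 1)
      (fun x => Real.arccos (Real.sqrt (π⁻¹ * Real.arccos x))) := by
  have hpi : (0:ℝ) < π := Real.pi_pos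
  apply MonotoneOn.convexOn_of_deriv (convex_Icc 0 1)
  · exact (Real.continuous_arccos.comp (Real.continuous_sqrt.comp
      (continuous_const.mul Real.continuous_arccos))).continuousOn
  · rw [interior_Icc]
    intro x hx
    exact ((hda hx).differentiableAt).differentiableWithinAt
  · rw [interior_Icc]
    intro a ha b hb hab
    rw [(hda ha).deriv, (hda hb).deriv]
    set ua := Real.arccos a with hua
    set ub := Real.arccos b with hub
    have hua0 : 0 < ua := Real.arccos_pos.2 ha.2
    have hub0 : 0 < ub := Real.arccos_pos.2 hb.2
    have hua2 : ua < π / 2 := Real.arccos_lt_pi_div_two.2 ha.1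
    have hub2 : ub < π / 2 := Real.arccos_lt_pi_div_two.2 hb.1
    have hle : ub ≤ ua :=
      Real.strictAntiOn_arccos.antitoneOn ⟨by linarith [ha.1], ha.2.le⟩
        ⟨by linarith [hb.1], hb.2.le⟩ hab
    -- denominators
    have hqa : 0 < π⁻¹ * ua * (1 - π⁻¹ * ua) := by
      have : π⁻¹ * ua < 1 := by rw [inv_mul_lt_iff₀ hpi]; linarith
      have : 0 < π⁻¹ * ua := by positivity
      nlinarith
    have hqb : 0 < π⁻¹ * ub * (1 - π⁻¹ * ub) := by
      have : π⁻¹ * ub < 1 := by rw [inv_mul_lt_iff₀ hpi]; linarith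
      have : 0 < π⁻¹ * ub := by positivity
      nlinarith
    have hsina : 0 < Real.sin ua := Real.sin_pos_of_pos_of_lt_pi hua0 (by linarith)
    have hsinb : 0 < Real.sin ub := Real.sin_pos_of_pos_of_lt_pi hub0 (by linarith)
    have he : ∀ u : ℝ, π⁻¹ * u * (1 - π⁻¹ * u) = π⁻¹ * π⁻¹ * (u * (π - u)) := by
      intro u; field_simp
    have hq : π⁻¹ * ub * (1 - π⁻¹ * ub) ≤ π⁻¹ * ua * (1 - π⁻¹ * ua) := by
      have key : ub * (π - ub) ≤ ua * (π - ua) := by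
        nlinarith [mul_nonneg (sub_nonneg.2 hle) (show (0:ℝ) ≤ π - ua - ub by linarith)]
      rw [he, he]
      exact mul_le_mul_of_nonneg_left key (by positivity)
    have hsin : Real.sin ub ≤ Real.sin ua :=
      Real.sin_le_sin_of_le_of_le_pi_div_two (by linarith) hua2.le hle
    have hda' : 0 < 2 * Real.sqrt (π⁻¹ * ua * (1 - π⁻¹ * ua)) * Real.sin ua := by
      positivity
    have hdb' : 0 < 2 * Real.sqrt (π⁻¹ * ub * (1 - π⁻¹ * ub)) * Real.sin ub := by
      positivity
    have hden : 2 * Real.sqrt (π⁻¹ * ub * (1 - π⁻¹ * ub)) * Real.sin ub ≤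
        2 * Real.sqrt (π⁻¹ * ua * (1 - π⁻¹ * ua)) * Real.sin ua := by
      have := Real.sqrt_le_sqrt hq
      nlinarith [Real.sqrt_nonneg (π⁻¹ * ub * (1 - π⁻¹ * ub))]
    exact div_le_div_of_nonneg_left (by positivity) hdb' hden
end

section
/- Define ξ(s) = φ(s)²/(Q(s)(1-Q(s))) and ζ₀(r) = E[ξ(rS)] for S ~ N(0,1). Then ζ₀(0) = 2/π and ζ₀(r) = 2/π + O(r²) as r → 0. -/
open Real MeasureTheory Filter Asymptotics

/-- Standard normal density. -/
noncomputable def phi (t : ℝ) : ℝ := (Real.sqrt (2 * π))⁻¹ * Real.exp (-t ^ 2 / 2)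

/-- Gaussian tail function `Q(x) = ∫_x^∞ φ`. -/
noncomputable def Qtail (x : ℝ) : ℝ := ∫ t in Set.Ioi x, phi t

noncomputable def xi (s : ℝ) : ℝ := (phi s) ^ 2 / (Qtail s * (1 - Qtail s))

/-- `ζ₀(r) = E[ξ(rS)]`, `S ~ N(0,1)`. -/
noncomputable def zeta0 (r : ℝ) : ℝ := ∫ s, xi (r * s) ∂(ProbabilityTheory.gaussianReal 0 1)


lemma phi_eq (t : ℝ) : phi t = (Real.sqrt (2 * π))⁻¹ * Real.exp (-(1/2) * t ^ 2) := by
  unfold phi; ring_nf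

lemma phi_pos (t : ℝ) : 0 < phi t := by
  unfold phi
  positivity

lemma phi_le_one (t : ℝ) : phi t ≤ 1 := by
  unfold phi
  have h1 : Real.exp (-t ^ 2 / 2) ≤ 1 := by
    rw [Real.exp_le_one_iff]
    nlinarith [sq_nonneg t]
  have h2 : (Real.sqrt (2 * π))⁻¹ ≤ 1 := by
    rw [inv_le_one_iff₀]
    right
    rw [show (1:ℝ) = Real.sqrt 1 by simp]
    exact Real.sqrt_le_sqrt (by nlinarith [Real.pi_gt_three])
  nlinarith [Real.exp_pos (-t^2/2), Real.sqrt_nonneg (2*π)]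

lemma phi_even (t : ℝ) : phi (-t) = phi t := by unfold phi; ring_nf

lemma phi_cont : Continuous phi := by
  unfold phi
  fun_prop

lemma integrable_phi : Integrable phi := by
  have h := (integrable_exp_neg_mul_sq (by norm_num : (0:ℝ) < 1/2)).const_mul (Real.sqrt (2 * π))⁻¹
  apply h.congr
  filter_upwards with t
  rw [phi_eq]

lemma integral_phi : ∫ t, phi t = 1 := by
  have h := integral_gaussian (1/2 : ℝ)
  have : ∫ t, phi t = (Real.sqrt (2 * π))⁻¹ * ∫ t, Real.exp (-(1/2) * t ^ 2) := by
    rw [← MeasureTheory.integral_const_mul]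
    exact integral_congr_ae (Filter.Eventually.of_forall fun t => phi_eq t)
  rw [this, h]
  rw [show π / (1/2 : ℝ) = 2 * π by ring]
  rw [inv_mul_cancel₀]
  positivity

lemma Qtail_eq (x : ℝ) : Qtail x = 1 - ∫ t in Set.Iic x, phi t := by
  have h := intervalIntegral.integral_Iic_add_Ioi (b := x) (integrable_phi.integrableOn) (integrable_phi.integrableOn)
  rw [integral_phi] at h
  unfold Qtail
  linarith

lemma Qtail_neg (x : ℝ) : Qtail (-x) = 1 - Qtail x := by
  have h1 : Qtail (-x) = ∫ t in Set.Ioi (-x), phi (-t) :=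
    setIntegral_congr_fun measurableSet_Ioi (fun t _ => (phi_even t).symm)
  rw [h1, integral_comp_neg_Ioi, neg_neg, Qtail_eq]
  ring

lemma hasDerivAt_Qtail (x : ℝ) : HasDerivAt Qtail (-(phi x)) x := by
  have key : ∀ y : ℝ, Qtail y = 1 - ((∫ t in Set.Iic 0, phi t) + ∫ t in (0:ℝ)..y, phi t) := by
    intro y
    rw [Qtail_eq]
    have := intervalIntegral.integral_Iic_sub_Iic (a := (0:ℝ)) (b := y) (integrable_phi.integrableOn) (integrable_phi.integrableOn)
    linarith
  have hd : HasDerivAt (fun y => 1 - ((∫ t in Set.Iic 0, phi t) + ∫ t in (0:ℝ)..y, phi t)) (-(phi x)) x := by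
    have hF : HasDerivAt (fun y => ∫ t in (0:ℝ)..y, phi t) (phi x) x := by
      exact intervalIntegral.integral_hasDerivAt_right
        (integrable_phi.intervalIntegrable)
        (phi_cont.aestronglyMeasurable.stronglyMeasurableAtFilter)
        phi_cont.continuousAt
    simpa using ((hF.const_add (∫ t in Set.Iic 0, phi t)).const_sub 1)
  exact hd.congr_of_eventuallyEq (Filter.Eventually.of_forall key)

lemma Qtail_cont : Continuous Qtail := by
  have : Differentiable ℝ Qtail := fun x => (hasDerivAt_Qtail x).differentiableAt
  exact this.continuous

lemma Qtail_strictAnti : StrictAnti Qtail := by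
  intro a b hab
  have hI : (0:ℝ) < ∫ t in a..b, phi t :=
    intervalIntegral.intervalIntegral_pos_of_pos (integrable_phi.intervalIntegrable)
      (fun t => phi_pos t) hab
  have h1 := Qtail_eq a
  have h2 := Qtail_eq b
  have := intervalIntegral.integral_Iic_sub_Iic (a := a) (b := b) (integrable_phi.integrableOn) (integrable_phi.integrableOn)
  linarith

lemma Qtail_pos (x : ℝ) : 0 < Qtail x := by
  unfold Qtail
  rw [setIntegral_pos_iff_support_of_nonneg_ae]
  · have : Function.support phi = Set.univ := by
      ext t; simp [Function.mem_support, (phi_pos t).ne']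
    rw [this, Set.univ_inter]
    simp [Real.volume_Ioi]
  · exact Filter.Eventually.of_forall fun t => (phi_pos t).le
  · exact integrable_phi.integrableOn

lemma Qtail_lt_one (x : ℝ) : Qtail x < 1 := by
  have := Qtail_pos (-x)
  rw [Qtail_neg] at this
  linarith

lemma Qtail_zero : Qtail 0 = 1/2 := by
  have := Qtail_neg 0
  rw [neg_zero] at this
  linarith

lemma hasDerivAt_phi (x : ℝ) : HasDerivAt phi (-(x * phi x)) x := by
  have h1 : HasDerivAt (fun t : ℝ => -t ^ 2 / 2) (-x) x := by
    have := ((hasDerivAt_pow 2 x).neg).div_const 2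
    simpa using this.congr_deriv (by ring)
  have h2 : HasDerivAt (fun t : ℝ => Real.exp (-t ^ 2 / 2)) (Real.exp (-x ^ 2 / 2) * (-x)) x :=
    (Real.hasDerivAt_exp _).comp x h1
  have h3 := h2.const_mul (Real.sqrt (2 * π))⁻¹
  unfold phi
  exact h3.congr_deriv (by ring)

noncomputable def hfun (s : ℝ) : ℝ := phi s ^ 2 - (2 / π) * (Qtail s * (1 - Qtail s))
noncomputable def hfun1 (s : ℝ) : ℝ :=
  -(2 * s) * phi s ^ 2 - (2 / π) * (phi s * (2 * Qtail s - 1))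
noncomputable def hfun2 (s : ℝ) : ℝ :=
  (-2 + 4 * s ^ 2) * phi s ^ 2 - (2 / π) * (-(s * phi s) * (2 * Qtail s - 1) - 2 * phi s ^ 2)

lemma hasDerivAt_hfun (s : ℝ) : HasDerivAt hfun (hfun1 s) s := by
  have h1 : HasDerivAt (fun t => phi t ^ 2) (2 * phi s * (-(s * phi s))) s := by
    exact ((hasDerivAt_pow 2 (phi s)).comp s (hasDerivAt_phi s)).congr_deriv (by simp)
  have h2 : HasDerivAt (fun t => Qtail t * (1 - Qtail t))
      ((-(phi s)) * (1 - Qtail s) + Qtail s * (-(-(phi s)))) s :=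
    (hasDerivAt_Qtail s).mul ((hasDerivAt_Qtail s).const_sub 1)
  have := h1.sub (h2.const_mul (2 / π))
  exact this.congr_deriv (by unfold hfun1; ring)

lemma hasDerivAt_hfun1 (s : ℝ) : HasDerivAt hfun1 (hfun2 s) s := by
  have hp := hasDerivAt_phi s
  have hsq : HasDerivAt (fun t => phi t ^ 2) (2 * phi s * (-(s * phi s))) s := by
    exact ((hasDerivAt_pow 2 (phi s)).comp s hp).congr_deriv (by simp)
  have h1 : HasDerivAt (fun t => -(2 * t) * phi t ^ 2)
      (-2 * phi s ^ 2 + -(2 * s) * (2 * phi s * (-(s * phi s)))) s := by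
    have := ((hasDerivAt_id s).const_mul 2).neg.mul hsq
    exact this.congr_deriv (by simp only [Pi.neg_apply, id_eq]; ring)
  have h2 : HasDerivAt (fun t => phi t * (2 * Qtail t - 1))
      ((-(s * phi s)) * (2 * Qtail s - 1) + phi s * (2 * (-(phi s)))) s := by
    have hq : HasDerivAt (fun t => 2 * Qtail t - 1) (2 * (-(phi s))) s :=
      ((hasDerivAt_Qtail s).const_mul 2).sub_const 1
    exact hp.mul hq
  have := h1.sub (h2.const_mul (2 / π))
  exact this.congr_deriv (by unfold hfun2; ring)

lemma phi_zero_sq : phi 0 ^ 2 = (2 * π)⁻¹ := by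
  have h : phi 0 = (Real.sqrt (2 * π))⁻¹ := by unfold phi; norm_num
  rw [h, ← Real.sqrt_inv, Real.sq_sqrt (by positivity)]

lemma hfun_zero : hfun 0 = 0 := by
  unfold hfun
  rw [Qtail_zero, phi_zero_sq]
  have hπ : π ≠ 0 := Real.pi_ne_zero
  field_simp
  ring

lemma hfun1_zero : hfun1 0 = 0 := by
  unfold hfun1
  rw [Qtail_zero]
  ring

lemma hfun2_bound (s : ℝ) (hs : s ∈ Set.Icc (-1:ℝ) 1) : |hfun2 s| ≤ 8 := by
  obtain ⟨hs1, hs2⟩ := hs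
  have hp := phi_pos s
  have hl := phi_le_one s
  have hq0 := Qtail_pos s
  have hq1 := Qtail_lt_one s
  have hpi := Real.pi_gt_three
  have habs : |s| ≤ 1 := abs_le.2 ⟨hs1, hs2⟩
  have h2q : |2 * Qtail s - 1| ≤ 1 := by rw [abs_le]; constructor <;> linarith
  have hs2' : s ^ 2 ≤ 1 := by nlinarith
  have hu : |s * phi s * (2 * Qtail s - 1)| ≤ 1 := by
    calc |s * phi s * (2 * Qtail s - 1)| = |s| * |phi s| * |2 * Qtail s - 1| := by
          rw [abs_mul, abs_mul]
      _ ≤ 1 := by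
          have e1 : |phi s| ≤ 1 := by rw [abs_of_pos hp]; exact hl
          have e2 := abs_nonneg s
          have e3 := abs_nonneg (phi s)
          have e4 := abs_nonneg (2 * Qtail s - 1)
          nlinarith [mul_le_one₀ habs e3 e1, mul_nonneg e2 e3]
  obtain ⟨hu1, hu2⟩ := abs_le.1 hu
  have hA1 : -2 ≤ (-2 + 4 * s ^ 2) * phi s ^ 2 := by nlinarith
  have hA2 : (-2 + 4 * s ^ 2) * phi s ^ 2 ≤ 2 := by nlinarith
  have hc1 : (0:ℝ) < 2 / π := by positivity
  have hc2 : (2:ℝ) / π ≤ 2 / 3 := by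
    apply div_le_div_of_nonneg_left (by norm_num) (by norm_num) hpi.le
  have hB1 : -3 ≤ -(s * phi s * (2 * Qtail s - 1)) - 2 * phi s ^ 2 := by nlinarith
  have hB2 : -(s * phi s * (2 * Qtail s - 1)) - 2 * phi s ^ 2 ≤ 1 := by nlinarith
  have key1 : (2 / π) * (-(s * phi s * (2 * Qtail s - 1)) - 2 * phi s ^ 2) ≤ (2/3) * 1 := by
    nlinarith
  have key2 : -((2:ℝ)/3) * 3 ≤ (2 / π) * (-(s * phi s * (2 * Qtail s - 1)) - 2 * phi s ^ 2) := by
    nlinarith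
  unfold hfun2
  rw [abs_le]
  constructor <;> nlinarith

lemma mvt_bound {f f' : ℝ → ℝ} (hd : ∀ x, HasDerivAt f (f' x) x) (h0 : f 0 = 0)
    {g : ℝ → ℝ} (hg : ∀ x ∈ Set.Icc (-1:ℝ) 1, |f' x| ≤ g x)
    (hgmono : ∀ x y, |x| ≤ |y| → y ∈ Set.Icc (-1:ℝ) 1 → g x ≤ g y) :
    ∀ s ∈ Set.Icc (-1:ℝ) 1, |f s| ≤ g s * |s| := by
  intro s hs
  rcases lt_trichotomy s 0 with hneg | hzero | hpos
  · obtain ⟨c, hc, hceq⟩ := exists_hasDerivAt_eq_slope f f' hneg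
      (fun x _ => (hd x).continuousAt.continuousWithinAt) (fun x _ => hd x)
    have hcI : c ∈ Set.Icc (-1:ℝ) 1 := ⟨by linarith [hc.1, hs.1], by linarith [hc.2]⟩
    have habs : |c| ≤ |s| := by
      rw [abs_of_neg hneg, abs_of_neg hc.2]
      linarith [hc.1]
    have : f s = f' c * s := by
      rw [h0, zero_sub, zero_sub, neg_div_neg_eq, eq_div_iff hneg.ne] at hceq
      linarith
    rw [this, abs_mul]
    have h1 : |f' c| ≤ g c := hg c hcI
    have h2 : g c ≤ g s := hgmono c s habs hs
    have := abs_nonneg s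
    nlinarith [abs_nonneg (f' c)]
  · simp [hzero, h0]
  · obtain ⟨c, hc, hceq⟩ := exists_hasDerivAt_eq_slope f f' hpos
      (fun x _ => (hd x).continuousAt.continuousWithinAt) (fun x _ => hd x)
    have hcI : c ∈ Set.Icc (-1:ℝ) 1 := ⟨by linarith [hc.1], by linarith [hc.2, hs.2]⟩
    have : f s = f' c * s := by
      rw [h0, sub_zero, sub_zero] at hceq
      rw [eq_div_iff hpos.ne'] at hceq
      linarith
    rw [this, abs_mul]
    have h1 : |f' c| ≤ g c := hg c hcI
    have h2 : g c ≤ g s := hgmono c s (by rw [abs_of_pos hpos, abs_of_pos hc.1]; linarith [hc.2]) hs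
    have := abs_nonneg s
    nlinarith [abs_nonneg (f' c)]

lemma hfun1_bound : ∀ s ∈ Set.Icc (-1:ℝ) 1, |hfun1 s| ≤ 8 * |s| := by
  have := mvt_bound hasDerivAt_hfun1 hfun1_zero (g := fun _ => 8)
    (fun x hx => hfun2_bound x hx) (fun _ _ _ _ => le_refl _)
  simpa using this

lemma hfun_bound : ∀ s ∈ Set.Icc (-1:ℝ) 1, |hfun s| ≤ 8 * s ^ 2 := by
  have key := mvt_bound hasDerivAt_hfun hfun_zero (g := fun x => 8 * |x|)
    hfun1_bound ?_
  · intro s hs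
    have := key s hs
    have e : |s| * |s| = s ^ 2 := by rw [← abs_mul, abs_mul_self, sq]
    calc |hfun s| ≤ 8 * |s| * |s| := this
      _ = 8 * s ^ 2 := by rw [mul_assoc, e]
  · intro x y hxy _
    show 8 * |x| ≤ 8 * |y|
    linarith

lemma xi_neg (s : ℝ) : xi (-s) = xi s := by
  unfold xi
  rw [phi_even, Qtail_neg]
  ring_nf

lemma denom_pos (s : ℝ) : 0 < Qtail s * (1 - Qtail s) :=
  mul_pos (Qtail_pos s) (by linarith [Qtail_lt_one s])

lemma denom_lb (s : ℝ) (hs : s ∈ Set.Icc (-1:ℝ) 1) :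
    Qtail 1 * (1 - Qtail 1) ≤ Qtail s * (1 - Qtail s) := by
  have h1 : Qtail s ≤ Qtail (-1) := Qtail_strictAnti.antitone hs.1
  have h2 : Qtail 1 ≤ Qtail s := Qtail_strictAnti.antitone hs.2
  rw [Qtail_neg] at h1
  nlinarith

lemma xi_sub_eq (s : ℝ) : xi s - 2 / π = hfun s / (Qtail s * (1 - Qtail s)) := by
  unfold xi hfun
  have hd := (denom_pos s).ne'
  have hπ := Real.pi_ne_zero
  rw [eq_div_iff hd, sub_mul, div_mul_cancel₀ _ hd]

lemma xi_local (s : ℝ) (hs : s ∈ Set.Icc (-1:ℝ) 1) :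
    |xi s - 2 / π| ≤ 8 / (Qtail 1 * (1 - Qtail 1)) * s ^ 2 := by
  rw [xi_sub_eq, abs_div, abs_of_pos (denom_pos s)]
  have h1 := hfun_bound s hs
  have h2 := denom_lb s hs
  have hδ : 0 < Qtail 1 * (1 - Qtail 1) := denom_pos 1
  calc |hfun s| / (Qtail s * (1 - Qtail s)) ≤ (8 * s ^ 2) / (Qtail 1 * (1 - Qtail 1)) :=
        div_le_div₀ (by positivity) h1 hδ h2
    _ = 8 / (Qtail 1 * (1 - Qtail 1)) * s ^ 2 := by ring

lemma phi_sq_le (s : ℝ) : phi s ^ 2 ≤ 3 * phi (s + 1) := by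
  have hexp : Real.exp (-s ^ 2 / 2) ^ 2 = Real.exp (1 - (s-1)^2/2) * Real.exp (-(s+1)^2/2) := by
    rw [← Real.exp_add, ← Real.exp_nat_mul]
    congr 1
    ring
  have h3 : Real.exp (1 - (s-1)^2/2) ≤ 3 := by
    calc Real.exp (1 - (s-1)^2/2) ≤ Real.exp 1 := by
          apply Real.exp_le_exp.2
          nlinarith [sq_nonneg (s-1)]
      _ ≤ 3 := by linarith [Real.exp_one_lt_d9]
  have hc : (Real.sqrt (2 * π))⁻¹ ≤ 1 := by
    rw [inv_le_one_iff₀]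
    right
    rw [show (1:ℝ) = Real.sqrt 1 by simp]
    exact Real.sqrt_le_sqrt (by nlinarith [Real.pi_gt_three])
  have hc0 : 0 < (Real.sqrt (2 * π))⁻¹ := by
    have : 0 < Real.sqrt (2 * π) := Real.sqrt_pos.2 (by positivity)
    positivity
  unfold phi
  rw [mul_pow, hexp]
  have he2 : 0 < Real.exp (-(s+1)^2/2) := Real.exp_pos _
  have he1 : 0 < Real.exp (1 - (s-1)^2/2) := Real.exp_pos _
  nlinarith [mul_nonneg (mul_nonneg (sub_nonneg.2 hc) hc0.le) (mul_pos he1 he2).le,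
    mul_nonneg (mul_nonneg hc0.le (sub_nonneg.2 h3)) he2.le]

lemma Qtail_le_half {s : ℝ} (hs : 0 ≤ s) : Qtail s ≤ 1/2 := by
  rw [← Qtail_zero]
  exact Qtail_strictAnti.antitone hs

lemma Qtail_ge_phi {s : ℝ} (hs : 0 ≤ s) : phi (s + 1) ≤ Qtail s := by
  have hsplit : Qtail s = (∫ t in Set.Ioc s (s+1), phi t) + ∫ t in Set.Ioi (s+1), phi t := by
    unfold Qtail
    rw [← setIntegral_union (Set.Ioc_disjoint_Ioi le_rfl) measurableSet_Ioi
      (integrable_phi.integrableOn) (integrable_phi.integrableOn),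
      Set.Ioc_union_Ioi_eq_Ioi (by linarith : s ≤ s + 1)]
  have h2 : (0:ℝ) ≤ ∫ t in Set.Ioi (s+1), phi t := by
    apply setIntegral_nonneg measurableSet_Ioi
    exact fun t _ => (phi_pos t).le
  have hble : ∀ t ∈ Set.Ioc s (s+1), phi (s+1) ≤ phi t := by
    intro t ht
    unfold phi
    have ht1 : t ≤ s + 1 := ht.2
    have ht0 : 0 ≤ t := le_of_lt (lt_of_le_of_lt hs ht.1)
    have : t ^ 2 ≤ (s+1)^2 := by nlinarith
    have := Real.exp_le_exp.2 (by linarith : -(s+1)^2/2 ≤ -t^2/2)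
    have hc0 : 0 < (Real.sqrt (2 * π))⁻¹ := by
      have : 0 < Real.sqrt (2 * π) := Real.sqrt_pos.2 (by positivity)
      positivity
    nlinarith
  have h1 : phi (s+1) ≤ ∫ t in Set.Ioc s (s+1), phi t := by
    have key := setIntegral_ge_of_const_le (μ := volume) (s := Set.Ioc s (s+1))
      (c := phi (s+1)) measurableSet_Ioc (by simp [Real.volume_Ioc]) hble
      (integrable_phi.integrableOn)
    have hv : volume.real (Set.Ioc s (s+1)) = 1 := by
      simp [Measure.real, Real.volume_Ioc]
    rw [hv, one_smul] at key
    exact key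
  linarith

lemma xi_nonneg (s : ℝ) : 0 ≤ xi s := by
  unfold xi
  have := denom_pos s
  positivity

lemma xi_le_six (s : ℝ) : xi s ≤ 6 := by
  wlog hs : 0 ≤ s with H
  · push_neg at hs
    rw [← xi_neg]
    exact H (-s) (by linarith)
  have hQφ := Qtail_ge_phi hs
  have hQh := Qtail_le_half hs
  have hQ0 := Qtail_pos s
  have hφ := phi_pos (s+1)
  have hsq := phi_sq_le s
  unfold xi
  rw [div_le_iff₀ (denom_pos s)]
  nlinarith

lemma xi_pointwise (s : ℝ) :
    |xi s - 2 / π| ≤ (8 / (Qtail 1 * (1 - Qtail 1)) + 7) * s ^ 2 := by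
  have hδ : 0 < Qtail 1 * (1 - Qtail 1) := denom_pos 1
  rcases le_or_gt (|s|) 1 with hs | hs
  · have hmem : s ∈ Set.Icc (-1:ℝ) 1 := Set.mem_Icc.2 (abs_le.1 hs)
    have := xi_local s hmem
    nlinarith [sq_nonneg s]
  · have h1 : |xi s - 2/π| ≤ 7 := by
      rw [abs_le]
      have := xi_nonneg s
      have := xi_le_six s
      have hπ : 2/π < 1 := by
        rw [div_lt_one Real.pi_pos]
        linarith [Real.pi_gt_three]
      have hπ0 : 0 < 2/π := by positivity
      constructor <;> linarith
    have hs2 : 1 ≤ s ^ 2 := by nlinarith [sq_abs s]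
    nlinarith [div_nonneg (by norm_num : (0:ℝ) ≤ 8) hδ.le]

lemma xi_cont : Continuous xi :=
  Continuous.div (phi_cont.pow 2)
    (Qtail_cont.mul (continuous_const.sub Qtail_cont)) (fun s => (denom_pos s).ne')

lemma xi_zero : xi 0 = 2 / π := by
  unfold xi
  rw [Qtail_zero, phi_zero_sq]
  have := Real.pi_ne_zero
  field_simp
  ring

lemma gaussianPDFReal_eq_phi : ProbabilityTheory.gaussianPDFReal 0 1 = phi := by
  ext x
  simp [ProbabilityTheory.gaussianPDFReal, phi]

lemma integrable_sq_gaussian :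
    Integrable (fun s : ℝ => s ^ 2) (ProbabilityTheory.gaussianReal 0 1) := by
  rw [ProbabilityTheory.gaussianReal_of_var_ne_zero 0 one_ne_zero]
  rw [integrable_withDensity_iff (ProbabilityTheory.measurable_gaussianPDF 0 1)
    (Filter.Eventually.of_forall fun x => ENNReal.ofReal_lt_top)]
  have hbase := (integrable_rpow_mul_exp_neg_mul_sq (by norm_num : (0:ℝ) < 1/2)
    (by norm_num : (-1:ℝ) < 2)).const_mul (Real.sqrt (2 * π))⁻¹
  apply hbase.congr
  filter_upwards with x
  rw [ProbabilityTheory.gaussianPDF, ENNReal.toReal_ofReal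
    (ProbabilityTheory.gaussianPDFReal_nonneg 0 1 x), gaussianPDFReal_eq_phi, phi_eq]
  rw [mul_left_comm, Real.rpow_two]

lemma integrable_xi_comp (r : ℝ) :
    Integrable (fun s => xi (r * s)) (ProbabilityTheory.gaussianReal 0 1) := by
  apply Integrable.mono' (integrable_const (6:ℝ))
    ((xi_cont.comp (continuous_const.mul continuous_id)).aestronglyMeasurable)
  filter_upwards with s
  simp only [Function.comp, id_eq]
  rw [Real.norm_eq_abs, abs_of_nonneg (xi_nonneg _)]
  exact xi_le_six _

lemma zeta0_zero : zeta0 0 = 2 / π := by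
  unfold zeta0
  simp only [zero_mul, xi_zero]
  simp [measure_univ]

lemma zeta0_bound (r : ℝ) :
    |zeta0 r - 2 / π| ≤
      ((8 / (Qtail 1 * (1 - Qtail 1)) + 7) * ∫ s, s ^ 2 ∂(ProbabilityTheory.gaussianReal 0 1))
        * r ^ 2 := by
  set γ := ProbabilityTheory.gaussianReal 0 1
  set K := 8 / (Qtail 1 * (1 - Qtail 1)) + 7 with hK
  have hconst : ∫ _ : ℝ, (2/π : ℝ) ∂γ = 2/π := by simp [measure_univ]
  have hsub : zeta0 r - 2/π = ∫ s, (xi (r * s) - 2/π) ∂γ := by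
    rw [integral_sub (integrable_xi_comp r) (integrable_const _), hconst]
    rfl
  rw [hsub]
  calc |∫ s, (xi (r * s) - 2/π) ∂γ| ≤ ∫ s, |xi (r * s) - 2/π| ∂γ := by
        simpa [Real.norm_eq_abs] using
          norm_integral_le_integral_norm (μ := γ) (fun s => xi (r * s) - 2/π)
    _ ≤ ∫ s, (K * r ^ 2) * s ^ 2 ∂γ := by
        apply integral_mono ((integrable_xi_comp r).sub (integrable_const _)).abs
          (integrable_sq_gaussian.const_mul _)
        intro s
        have := xi_pointwise (r * s)
        calc |xi (r * s) - 2/π| ≤ K * (r * s) ^ 2 := this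
          _ = (K * r ^ 2) * s ^ 2 := by ring
    _ = (K * ∫ s, s ^ 2 ∂γ) * r ^ 2 := by
        rw [MeasureTheory.integral_const_mul]
        ring

theorem stmt_12 :
    zeta0 0 = 2 / π ∧
    (fun r : ℝ => zeta0 r - 2 / π) =O[nhds 0] (fun r : ℝ => r ^ 2) := by
  constructor
  · exact zeta0_zero
  · apply Asymptotics.IsBigO.of_bound
      ((8 / (Qtail 1 * (1 - Qtail 1)) + 7) * ∫ s, s ^ 2 ∂(ProbabilityTheory.gaussianReal 0 1))
    filter_upwards with r
    rw [Real.norm_eq_abs, Real.norm_eq_abs, abs_of_nonneg (sq_nonneg r)]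
    exact zeta0_bound r
end
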